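/- Let o_1, ..., o_n be independent Bernoulli random variables with P[o_m = 1] = p_m(θ), and let f: {0,1}^n → ℝ. Then the gradient of E[f(o)] with respect to θ equals E[ Σ_m ∇_θ p_m(θ)·(f(o) − f(o with coordinate m flipped)) · (2o_m − 1) ], where flipping coordinate m means replacing o_m by 1 − o_m. -/

import Mathlib

open Finset

/-- Probability mass of a joint outcome of independent Bernoulli variables. -/
noncomputable def bernoulliMass {n : ℕ} (p : Fin n → ℝ) (o : Fin n → Bool) : ℝ :=
  ∏ m, if o m then p m else 1 - p m

/-- Flip coordinate `m` of the binary vector `o`. -/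
def flipCoord {n : ℕ} (o : Fin n → Bool) (m : Fin n) : Fin n → Bool :=
  Function.update o m (!o m)

/-- The value of the spike `o_m` as a real number. -/
def bval {n : ℕ} (o : Fin n → Bool) (m : Fin n) : ℝ := if o m then 1 else 0

lemma flip_invol {n : ℕ} (m : Fin n) : Function.Involutive (fun o => flipCoord o m) := by
  intro o
  funext k
  by_cases h : k = m
  · subst h; simp [flipCoord]
  · simp [flipCoord, Function.update_of_ne h]

/-- Local-marginalization gradient estimator: for independent Bernoulli variables
`o_m` with `P[o_m = 1] = p_m(θ)` and `f : {0,1}^n → ℝ`, the derivative of `E[f(o)]` in `θ`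
equals `E[Σ_m p_m′(θ) · (f(o) - f(ō_m)) · (2 o_m - 1)]`, where `ō_m` flips coordinate `m`. -/
theorem stmt4 {n : ℕ} (p : Fin n → ℝ → ℝ) (p' : Fin n → ℝ) (θ₀ : ℝ)
    (hp : ∀ m, HasDerivAt (p m) (p' m) θ₀)
    (hp01 : ∀ m θ, 0 ≤ p m θ ∧ p m θ ≤ 1)
    (f : (Fin n → Bool) → ℝ) :
    HasDerivAt (fun θ => ∑ o : Fin n → Bool, bernoulliMass (fun m => p m θ) o * f o)
      (∑ o : Fin n → Bool, bernoulliMass (fun m => p m θ₀) o *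
        ∑ m, p' m * (f o - f (flipCoord o m)) * (2 * bval o m - 1)) θ₀ := by
  set q : (Fin n → Bool) → Fin n → ℝ := fun o k => if o k then p k θ₀ else 1 - p k θ₀ with hq
  -- derivative of each mass
  have hmass : ∀ o : Fin n → Bool,
      HasDerivAt (fun θ => bernoulliMass (fun m => p m θ) o)
        (∑ m, (∏ j ∈ univ.erase m, q o j) * (p' m * (2 * bval o m - 1))) θ₀ := by
    intro o
    have h := HasDerivAt.fun_finsetProd (u := univ)
      (f := fun k θ => if o k then p k θ else 1 - p k θ)
      (f' := fun k => p' k * (2 * bval o k - 1)) (x := θ₀) ?_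
    · exact h
    · intro k _
      show HasDerivAt (fun θ => if o k = true then p k θ else 1 - p k θ)
        (p' k * (2 * bval o k - 1)) θ₀
      by_cases h : o k
      · have e : p' k * (2 * bval o k - 1) = p' k := by norm_num [bval, h]
        rw [e]; simpa [h] using hp k
      · have e : p' k * (2 * bval o k - 1) = -(p' k) := by norm_num [bval, h]
        rw [e]; simpa [h] using ((hasDerivAt_const θ₀ (1:ℝ)).fun_sub (hp k))
  have hD : HasDerivAt (fun θ => ∑ o : Fin n → Bool, bernoulliMass (fun m => p m θ) o * f o)
      (∑ o : Fin n → Bool,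
        (∑ m, (∏ j ∈ univ.erase m, q o j) * (p' m * (2 * bval o m - 1))) * f o) θ₀ :=
    HasDerivAt.fun_sum fun o _ => (hmass o).mul_const (f o)
  convert hD using 1
  -- Now prove equality of the two candidate derivatives
  have hEq : ∀ m (o : Fin n → Bool),
      bernoulliMass (fun k => p k θ₀) o + bernoulliMass (fun k => p k θ₀) (flipCoord o m)
        = ∏ j ∈ univ.erase m, q o j := by
    intro m o
    have h1 : bernoulliMass (fun k => p k θ₀) o = q o m * ∏ j ∈ univ.erase m, q o j := by
      rw [bernoulliMass, ← Finset.mul_prod_erase univ _ (mem_univ m)]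
    have hprod : ∏ j ∈ univ.erase m, q (flipCoord o m) j = ∏ j ∈ univ.erase m, q o j := by
      apply Finset.prod_congr rfl
      intro j hj
      have : j ≠ m := (Finset.mem_erase.mp hj).1
      simp [q, flipCoord, Function.update_of_ne this]
    have h2 : bernoulliMass (fun k => p k θ₀) (flipCoord o m)
        = q (flipCoord o m) m * ∏ j ∈ univ.erase m, q o j := by
      rw [bernoulliMass, ← Finset.mul_prod_erase univ _ (mem_univ m), hprod]
    have h3 : q o m + q (flipCoord o m) m = 1 := by
      by_cases h : o m <;> simp [q, flipCoord, h]
    rw [h1, h2, ← add_mul, h3, one_mul]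
  -- rewrite both sides as double sums over m then o
  simp only [Finset.mul_sum, Finset.sum_mul]
  rw [Finset.sum_comm]
  conv_rhs => rw [Finset.sum_comm]
  apply Finset.sum_congr rfl
  intro m _
  have hflip : ∑ o : Fin n → Bool,
      bernoulliMass (fun k => p k θ₀) o * ((p' m * (2 * bval o m - 1)) * f (flipCoord o m))
      = ∑ o : Fin n → Bool,
      bernoulliMass (fun k => p k θ₀) (flipCoord o m) * (-(p' m * (2 * bval o m - 1)) * f o) := by
    apply Fintype.sum_bijective (fun o => flipCoord o m) (flip_invol m).bijective
    intro o
    have h1 : flipCoord (flipCoord o m) m = o := flip_invol m o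
    have h2 : bval (flipCoord o m) m = 1 - bval o m := by
      by_cases h : o m <;> simp [bval, flipCoord, h]
    rw [h1, h2]; ring_nf
  calc ∑ o : Fin n → Bool,
        bernoulliMass (fun k => p k θ₀) o *
          (p' m * (f o - f (flipCoord o m)) * (2 * bval o m - 1))
      = ∑ o : Fin n → Bool,
          (bernoulliMass (fun k => p k θ₀) o * ((p' m * (2 * bval o m - 1)) * f o)
           - bernoulliMass (fun k => p k θ₀) o * ((p' m * (2 * bval o m - 1)) * f (flipCoord o m))) := by
        apply Finset.sum_congr rfl; intro o _; ring
    _ = ∑ o : Fin n → Bool,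
          (bernoulliMass (fun k => p k θ₀) o * ((p' m * (2 * bval o m - 1)) * f o)
           + bernoulliMass (fun k => p k θ₀) (flipCoord o m) * ((p' m * (2 * bval o m - 1)) * f o)) := by
        rw [Finset.sum_sub_distrib, hflip, Finset.sum_add_distrib, sub_eq_add_neg,
          ← Finset.sum_neg_distrib]
        congr 1
        apply Finset.sum_congr rfl; intro o _; ring
    _ = ∑ o : Fin n → Bool,
          (∏ j ∈ univ.erase m, q o j) * (p' m * (2 * bval o m - 1)) * f o := by
        apply Finset.sum_congr rfl; intro o _
        rw [← hEq m o]; ring
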